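/- On an almost nearly cosymplectic manifold, the covariant derivative of h̄ satisfies ḡ((∇̄_X h̄)Y, Z) = -η̄(Y)ḡ(h̄²X, Z) + η̄(Z)ḡ(h̄²X, Y), and this equals -R̄(ξ̄, X, Y, Z) where R̄ is the Riemannian curvature of ḡ. -/
import Mathlib


/-- On an almost nearly cosymplectic manifold,
`ḡ((∇̄_X h̄)Y, Z) = -η̄(Y)ḡ(h̄²X, Z) + η̄(Z)ḡ(h̄²X, Y)`, and this equals
`-R̄(ξ̄, X, Y, Z)` (the Riemannian curvature of `ḡ`), `ξ̄` being Killing.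
Here `h̄ = h`, `hX = ∇_X ξ`, the nearly cosymplectic identity
`(∇_X h)Y = g(h²X,Y)ξ - η(Y)h²X` holds, and
`∇̄_X Y = ∇_X Y + (1/2)η(Y)hX + (1/2)η(X)hY` (D-homothety `a = 3/2`). -/
theorem stmt_9 {V : Type*} [AddCommGroup V] [Module ℝ V]
    (g : V →ₗ[ℝ] V →ₗ[ℝ] ℝ) (η : V →ₗ[ℝ] ℝ) (ξ : V)
    (nabla nb : V → V → V) (dη : V → V → ℝ) (h : V → V)
    (gb : V → V → ℝ) (ηb : V → ℝ) (ξb : V)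
    (Rb : V → V → V → V → ℝ)
    (hηξ : η ξ = 1)
    (hη : ∀ X, η X = g X ξ)
    (hgsymm : ∀ X Y, g X Y = g Y X)
    (hh : ∀ X, h X = nabla X ξ)
    (hhg : ∀ X Y, g (h X) Y = (1/2) * dη X Y)
    (hhskew : ∀ X Y, g (h X) Y = - g X (h Y))
    (hηh : ∀ X, η (h X) = 0)
    (hhξ : h ξ = 0)
    (hnc16 : ∀ X Y, nabla X (h Y) - h (nabla X Y) =
      (g (h (h X)) Y) • ξ - (η Y) • h (h X))
    (hgb : ∀ X Y, gb X Y = (3/2) * g X Y + (3/4) * (η X * η Y))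
    (hηb : ∀ X, ηb X = (3/2) * η X)
    (hξb : ξb = (2/3 : ℝ) • ξ)
    (hnb : ∀ X Y, nb X Y = nabla X Y + ((1/2) * η Y) • h X + ((1/2) * η X) • h Y)
    (hKillR : ∀ X Y Z, gb (nb X (h Y) - h (nb X Y)) Z = - Rb ξb X Y Z) :
    (∀ X Y Z, gb (nb X (h Y) - h (nb X Y)) Z =
      - ηb Y * gb (h (h X)) Z + ηb Z * gb (h (h X)) Y) ∧
    (∀ X Y Z, - Rb ξb X Y Z =
      - ηb Y * gb (h (h X)) Z + ηb Z * gb (h (h X)) Y) := by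
  have gξ : ∀ Z, g ξ Z = η Z := fun Z => by rw [hη Z, hgsymm]
  have hB : ∀ X Y, h (nabla X Y) =
      nabla X (h Y) - (g (h (h X)) Y) • ξ + (η Y) • h (h X) := by
    intro X Y
    have e := hnc16 X Y
    have e2 : h (nabla X Y) =
        nabla X (h Y) - ((g (h (h X)) Y) • ξ - (η Y) • h (h X)) := by
      rw [← e]; abel
    rw [e2]; abel
  have H1 : ∀ X Y Z, gb (nb X (h Y) - h (nb X Y)) Z =
      - ηb Y * gb (h (h X)) Z + ηb Z * gb (h (h X)) Y := by
    intro X Y Z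
    have s1 : g (h (nb X Y)) Z = - (g (nabla X Y) (h Z)
        + (1/2 * η Y) * g (h X) (h Z) + (1/2 * η X) * g (h Y) (h Z)) := by
      rw [hhskew, hnb]
      simp only [map_add, map_smul, LinearMap.add_apply, LinearMap.smul_apply,
        smul_eq_mul]
    have s2 : g (nabla X Y) (h Z) = - (g (nabla X (h Y)) Z
        - g (h (h X)) Y * η Z + η Y * g (h (h X)) Z) := by
      have e := hhskew (nabla X Y) Z
      rw [hB] at e
      simp only [map_add, map_sub, map_smul, LinearMap.add_apply,
        LinearMap.sub_apply, LinearMap.smul_apply, smul_eq_mul, gξ] at e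
      linarith
    have s3 : η (nabla X (h Y)) = g (h (h X)) Y := by
      have e := hηh (nabla X Y)
      rw [hB] at e
      simp only [map_add, map_sub, map_smul, smul_eq_mul, hηξ, hηh,
        mul_one, mul_zero, add_zero] at e
      linarith
    have s4 : g (h X) (h Z) = - g (h (h X)) Z := by
      have := hhskew (h X) Z; linarith
    have s5 : g (h Y) (h Z) = - g (h (h Y)) Z := by
      have := hhskew (h Y) Z; linarith
    have eA : g (nb X (h Y)) Z = g (nabla X (h Y)) Z
        + (1/2 * η X) * g (h (h Y)) Z := by
      rw [hnb]
      simp only [map_add, map_smul, LinearMap.add_apply, LinearMap.smul_apply,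
        smul_eq_mul, hηh]
      ring
    have eB : η (nb X (h Y)) = g (h (h X)) Y := by
      rw [hnb]
      simp only [map_add, map_smul, smul_eq_mul, hηh, s3]
      ring
    rw [hgb, hgb, hgb, hηb, hηb, map_sub, LinearMap.sub_apply, map_sub,
      s1, s2, eA, eB, s4, s5, hηh (nb X Y), hηh (h X)]
    ring
  refine ⟨H1, fun X Y Z => ?_⟩
  rw [← hKillR]; exact H1 X Y Z
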